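/- Let c be an admissible coefficient function satisfying (Cubic values). Let i_1, i_2, i_3 ∈ {1,2,3} be pairwise distinct and let γ ∈ ℤ^{μ_A−2} be non-negative with |γ| = 4 and γ − e_{i_1,j_1} − e_{i_2,j_2} − e_{i_3,j_3} ≥ 0. If a_{i_1} ≥ 3 and j_1 ≥ 2, then c(γ,0) = 0. -/

import Mathlib

/- Common framework: Frobenius manifolds for orbifold projective lines ℙ¹_A,
   following Ishibashi–Shiraishi–Takahashi. -/

namespace FrobeniusUniqueness

/-- A point index `(i, j)` labelling a flat coordinate `t_{i,j}`. -/
abbrev Pt : Type := Fin 3 × ℕ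

/-- A non-negative element of `ℤ^{μ_A − 2}`: an exponent vector `α` with `α_{i,j} ∈ ℕ`. -/
abbrev Expv : Type := Pt →₀ ℕ

/-- The standard basis vector `e_{i,j}`. -/
noncomputable def e (i : Fin 3) (j : ℕ) : Expv := Finsupp.single (i, j) 1

/-- The length `|α|` of an exponent vector. -/
def len (α : Expv) : ℕ := α.sum fun _ n => n

/-- A point index `(i,j)` is valid if `1 ≤ j ≤ a_i − 1`. -/
def ValidPt (A : Fin 3 → ℕ) (p : Pt) : Prop := 1 ≤ p.2 ∧ p.2 ≤ A p.1 - 1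

/-- An exponent vector lies in `ℤ^{μ_A − 2}` iff it is supported on valid indices. -/
def Valid (A : Fin 3 → ℕ) (α : Expv) : Prop := ∀ p ∈ α.support, ValidPt A p

/-- The combinatorial factor `s_{a,b,c}`. -/
def sFactor (a b c : ℕ) : ℂ :=
  if a = b ∧ b = c then 6
  else if a ≠ b ∧ b ≠ c ∧ a ≠ c then 1
  else 2

/-- The index type for the flat coordinates `t_1`, `t_{i,j}`, `t_{μ_A}`. -/
inductive Idx : Type where
  | one : Idx
  | pt : Fin 3 → ℕ → Idx
  | mu : Idx
deriving DecidableEq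

/-- Validity of a flat coordinate index. -/
def ValidIdx (A : Fin 3 → ℕ) : Idx → Prop
  | .one => True
  | .pt i j => ValidPt A (i, j)
  | .mu => True

/-- The metric `η` in the frame `∂_1, ∂_{i,j}, ∂_{μ_A}`. -/
noncomputable def eta (A : Fin 3 → ℕ) : Idx → Idx → ℂ
  | .one, .mu => 1
  | .mu, .one => 1
  | .pt i j, .pt i' j' =>
      if i = i' ∧ j + j' = A i ∧ 1 ≤ j ∧ j ≤ A i - 1 then (A i : ℂ)⁻¹ else 0
  | _, _ => 0

/-- The point indices occurring in an `Idx`. -/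
def ptsOf : Idx → List Pt
  | .pt i j => [(i, j)]
  | _ => []

/-- The number of occurrences of `μ_A` in an `Idx`. -/
def muCount : Idx → ℕ
  | .mu => 1
  | _ => 0

/-- The factor produced when the monomial `t^{β + Σ_{p ∈ ps} e_p}` is differentiated by
`∏_{p ∈ ps} ∂_p`, leaving the monomial `t^β`. -/
noncomputable def dfac (β : Expv) : List Pt → ℕ
  | [] => 1
  | p :: ps =>
      ((β + ((ps.map fun q => (Finsupp.single q 1 : Expv)).sum) + Finsupp.single p 1 : Expv) p)
        * dfac β ps

/-- `der A c a b d β m` is the coefficient of `t^β · e^{m·t_{μ_A}}` in `∂_a ∂_b ∂_d F`, where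
`F = (1/2)t_1²t_{μ_A} + (1/2)t_1·Σ_{i,j}(1/a_i)t_{i,j}t_{i,a_i−j} + Σ_{α,m} c(α,m)t^α e^{m t_{μ_A}}`
is the potential of the coefficient function `c`.  In particular `∂_1∂_a∂_b F = η(∂_a,∂_b)`. -/
noncomputable def der (A : Fin 3 → ℕ) (c : Expv → ℕ → ℂ) (a b d : Idx) (β : Expv) (m : ℕ) : ℂ :=
  if a = .one then (if β = 0 ∧ m = 0 then eta A b d else 0)
  else if b = .one then (if β = 0 ∧ m = 0 then eta A a d else 0)
  else if d = .one then (if β = 0 ∧ m = 0 then eta A a b else 0)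
  else
    (m : ℂ) ^ (muCount a + muCount b + muCount d) *
      (dfac β (ptsOf a ++ ptsOf b ++ ptsOf d) : ℂ) *
      c (β + (((ptsOf a ++ ptsOf b ++ ptsOf d).map fun q => (Finsupp.single q 1 : Expv)).sum)) m

/-- The coefficient of `t^β · e^{m·t_{μ_A}}` in
`Σ_{σ,τ} ∂_a∂_b∂_σF · η^{στ} · ∂_τ∂_d∂_e F`, where `(η^{στ})` is the inverse matrix of
`(η_{στ})` (so the only nonzero entries are `η^{1,μ_A} = η^{μ_A,1} = 1` and
`η^{(i,j),(i,a_i−j)} = a_i`). -/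
noncomputable def quadTerm (A : Fin 3 → ℕ) (c : Expv → ℕ → ℂ) (a b d e' : Idx)
    (β : Expv) (m : ℕ) : ℂ :=
  ∑ x ∈ Finset.HasAntidiagonal.antidiagonal β, ∑ y ∈ Finset.HasAntidiagonal.antidiagonal m,
    (der A c a b .one x.1 y.1 * der A c .mu d e' x.2 y.2
     + der A c a b .mu x.1 y.1 * der A c .one d e' x.2 y.2
     + ∑ i : Fin 3, ∑ j ∈ Finset.Icc 1 (A i - 1),
         (A i : ℂ) * der A c a b (.pt i j) x.1 y.1 * der A c (.pt i (A i - j)) d e' x.2 y.2)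

/-- `χ_A = 1/a_1 + 1/a_2 + 1/a_3 − 1`. -/
noncomputable def chi (A : Fin 3 → ℕ) : ℚ := (A 0 : ℚ)⁻¹ + (A 1 : ℚ)⁻¹ + (A 2 : ℚ)⁻¹ - 1

/-- The degree of the monomial `t^α`: `Σ_{i,j} α_{i,j}·(a_i − j)/a_i`. -/
noncomputable def deg (A : Fin 3 → ℕ) (α : Expv) : ℚ :=
  α.sum fun p n => (n : ℚ) * (((A p.1 : ℚ) - (p.2 : ℚ)) / (A p.1 : ℚ))

/-- A coefficient function is admissible if it satisfies (Homogeneity) and the WDVV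
equations (coefficientwise, in the variables `t_{i,j}` and `e^{t_{μ_A}}`). -/
structure IsAdmissible (A : Fin 3 → ℕ) (c : Expv → ℕ → ℂ) : Prop where
  homog : ∀ α : Expv, Valid A α → ∀ m : ℕ, c α m ≠ 0 → deg A α + (m : ℚ) * chi A = 2
  wdvv : ∀ a b d e' : Idx, ValidIdx A a → ValidIdx A b → ValidIdx A d → ValidIdx A e' →
      ∀ β : Expv, Valid A β → ∀ m : ℕ,
        quadTerm A c a b d e' β m = quadTerm A c a d b e' β m

/-- (Cubic values). -/
def CubicValues (A : Fin 3 → ℕ) (c : Expv → ℕ → ℂ) : Prop :=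
  (∀ (i₁ i₂ i₃ : Fin 3) (j₁ j₂ j₃ : ℕ),
      ValidPt A (i₁, j₁) → ValidPt A (i₂, j₂) → ValidPt A (i₃, j₃) →
      ¬(i₁ = i₂ ∧ i₂ = i₃) → c (e i₁ j₁ + e i₂ j₂ + e i₃ j₃) 0 = 0) ∧
  (∀ (i : Fin 3) (j₁ j₂ j₃ : ℕ),
      ValidPt A (i, j₁) → ValidPt A (i, j₂) → ValidPt A (i, j₃) →
      sFactor j₁ j₂ j₃ * c (e i j₁ + e i j₂ + e i j₃) 0 =
        if j₁ + j₂ + j₃ = A i then (A i : ℂ)⁻¹ else 0)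

/-- (Normalization). -/
def Normalization (A : Fin 3 → ℕ) (c : Expv → ℕ → ℂ) : Prop :=
  (2 ≤ A 0 → c (e 0 1 + e 1 1 + e 2 1) 1 = 1) ∧
  (A 0 = 1 → A 0 < A 1 → c (e 1 1 + e 2 1) 1 = 1) ∧
  (A 0 = 1 → A 1 = 1 → A 1 < A 2 → c (e 2 1) 1 = 1) ∧
  (A 0 = 1 → A 1 = 1 → A 2 = 1 → c 0 1 = 1)

/-- (Separation). -/
def Separation (A : Fin 3 → ℕ) (c : Expv → ℕ → ℂ) : Prop :=
  ∀ γ : Expv, Valid A γ →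
    ∀ (i₁ i₂ : Fin 3) (j₁ j₂ : ℕ), i₁ ≠ i₂ → ValidPt A (i₁, j₁) → ValidPt A (i₂, j₂) →
      e i₁ j₁ + e i₂ j₂ ≤ γ → c γ 0 = 0

/-- The automorphism of `ℤ^{μ_A−2}` exchanging `e_{i₁,j}` and `e_{i₂,j}` for all `j`. -/
def swapExp (i₁ i₂ : Fin 3) (α : Expv) : Expv :=
  Finsupp.equivMapDomain ((Equiv.swap i₁ i₂).prodCongr (Equiv.refl ℕ)) α

/-- (Symmetry). -/
def Symmetry (A : Fin 3 → ℕ) (c : Expv → ℕ → ℂ) : Prop :=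
  ∀ i₁ i₂ : Fin 3, A i₁ = A i₂ → ∀ α : Expv, Valid A α → ∀ m : ℕ,
    c (swapExp i₁ i₂ α) m = c α m



/-! ### Auxiliary lemmas -/

lemma len_add (α β : Expv) : len (α + β) = len α + len β := by
  classical
  unfold len
  exact Finsupp.sum_add_index' (fun _ => rfl) (fun _ _ _ => rfl)

lemma len_eq_zero {α : Expv} (h : len α = 0) : α = 0 := by
  classical
  ext p
  by_contra hp
  have hps : p ∈ α.support := Finsupp.mem_support_iff.2 (by simpa using hp)
  have : α p ≤ len α :=
    Finset.single_le_sum (f := fun q => α q) (fun _ _ => Nat.zero_le _) hps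
  have hp0 : α p ≠ 0 := Finsupp.mem_support_iff.1 hps
  omega

lemma len_e (i : Fin 3) (j : ℕ) : len (e i j) = 1 := by
  unfold len e
  rw [Finsupp.sum_single_index rfl]

lemma sFactor_ne_zero (a b c : ℕ) : sFactor a b c ≠ 0 := by
  unfold sFactor; split_ifs <;> norm_num

lemma dfac_ne_zero (β : Expv) : ∀ ps : List Pt, dfac β ps ≠ 0
  | [] => one_ne_zero
  | p :: ps => by
    unfold dfac
    refine Nat.mul_ne_zero ?_ (dfac_ne_zero β ps)
    simp [Finsupp.add_apply]

lemma validPt_mk {A : Fin 3 → ℕ} {i : Fin 3} {j : ℕ} (h1 : 1 ≤ j) (h2 : j ≤ A i - 1) :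
    ValidPt A (i, j) := ⟨h1, h2⟩

lemma validPt_elim {A : Fin 3 → ℕ} {i : Fin 3} {j : ℕ} (h : ValidPt A (i, j)) :
    1 ≤ j ∧ j ≤ A i - 1 := h

lemma der_ppp (A : Fin 3 → ℕ) (c : Expv → ℕ → ℂ) (i1 i2 i3 : Fin 3) (j1 j2 j3 : ℕ)
    (β : Expv) :
    der A c (.pt i1 j1) (.pt i2 j2) (.pt i3 j3) β 0 =
      (dfac β [(i1, j1), (i2, j2), (i3, j3)] : ℂ) *
        c (β + (e i1 j1 + e i2 j2 + e i3 j3)) 0 := by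
  simp [der, ptsOf, muCount, e, add_assoc]

lemma der_mu_pp (A : Fin 3 → ℕ) (c : Expv → ℕ → ℂ) (i2 i3 : Fin 3) (j2 j3 : ℕ)
    (β : Expv) :
    der A c .mu (.pt i2 j2) (.pt i3 j3) β 0 = 0 := by
  simp [der, ptsOf, muCount]

lemma der_pp_mu (A : Fin 3 → ℕ) (c : Expv → ℕ → ℂ) (i2 i3 : Fin 3) (j2 j3 : ℕ)
    (β : Expv) :
    der A c (.pt i2 j2) (.pt i3 j3) .mu β 0 = 0 := by
  simp [der, ptsOf, muCount]

lemma quadTerm_pt_zero (A : Fin 3 → ℕ) (c : Expv → ℕ → ℂ)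
    (p1 q1 r1 s1 : Fin 3) (p2 q2 r2 s2 : ℕ) (β : Expv) :
    quadTerm A c (.pt p1 p2) (.pt q1 q2) (.pt r1 r2) (.pt s1 s2) β 0 =
      ∑ x ∈ Finset.HasAntidiagonal.antidiagonal β, ∑ i : Fin 3, ∑ j ∈ Finset.Icc 1 (A i - 1),
        (A i : ℂ) *
          ((dfac x.1 [(p1, p2), (q1, q2), (i, j)] : ℂ) *
            c (x.1 + (e p1 p2 + e q1 q2 + e i j)) 0) *
          ((dfac x.2 [(i, A i - j), (r1, r2), (s1, s2)] : ℂ) *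
            c (x.2 + (e i (A i - j) + e r1 r2 + e s1 s2)) 0) := by
  unfold quadTerm
  simp only [Finset.Nat.antidiagonal_zero, Finset.sum_singleton, der_mu_pp, der_pp_mu,
    mul_zero, zero_mul, zero_add, add_zero, der_ppp]

/-- Sub-Lemma (Step 1-(i)). -/
theorem step1_i (A : Fin 3 → ℕ) (hA : ∀ i, 1 ≤ A i) (hA01 : A 0 ≤ A 1) (hA12 : A 1 ≤ A 2)
    (c : Expv → ℕ → ℂ) (hadm : IsAdmissible A c) (hcub : CubicValues A c)
    (i₁ i₂ i₃ : Fin 3) (h12 : i₁ ≠ i₂) (h13 : i₁ ≠ i₃) (h23 : i₂ ≠ i₃)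
    (j₁ j₂ j₃ : ℕ)
    (hv₁ : ValidPt A (i₁, j₁)) (hv₂ : ValidPt A (i₂, j₂)) (hv₃ : ValidPt A (i₃, j₃))
    (γ : Expv) (hγ : Valid A γ) (hlen : len γ = 4)
    (hle : e i₁ j₁ + e i₂ j₂ + e i₃ j₃ ≤ γ)
    (ha : 3 ≤ A i₁) (hj₁ : 2 ≤ j₁) :
    c γ 0 = 0 := by
  classical
  obtain ⟨hj₁1, hj₁2⟩ := validPt_elim hv₁
  have hβT : (γ - (e i₁ j₁ + e i₂ j₂ + e i₃ j₃)) + (e i₁ j₁ + e i₂ j₂ + e i₃ j₃) = γ :=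
    tsub_add_cancel_of_le hle
  set β : Expv := γ - (e i₁ j₁ + e i₂ j₂ + e i₃ j₃) with hβdef
  have hlenβ : len β = 1 := by
    have h4 := congrArg len hβT
    rw [len_add, len_add, len_add, len_e, len_e, len_e, hlen] at h4
    omega
  have hβle : β ≤ γ := tsub_le_self
  have hβvalid : Valid A β := by
    intro p hp
    apply hγ
    rw [Finsupp.mem_support_iff] at hp ⊢
    have := (Finsupp.le_def.mp hβle) p
    omega
  have hv11 : ValidPt A (i₁, 1) := validPt_mk (le_refl 1) (by omega)
  have hvj1m : ValidPt A (i₁, j₁ - 1) := validPt_mk (by omega) (by omega)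
  have hW := hadm.wdvv (.pt i₂ j₂) (.pt i₃ j₃) (.pt i₁ 1) (.pt i₁ (j₁ - 1))
    hv₂ hv₃ hv11 hvj1m β hβvalid 0
  -- the nonvanishing cubic coefficient
  set c₀ : ℂ := c (e i₁ (A i₁ - j₁) + e i₁ 1 + e i₁ (j₁ - 1)) 0 with hc₀def
  have hvmj : ValidPt A (i₁, A i₁ - j₁) := validPt_mk (by omega) (by omega)
  have hc₀ : sFactor (A i₁ - j₁) 1 (j₁ - 1) * c₀ = (A i₁ : ℂ)⁻¹ := by
    have h := hcub.2 i₁ (A i₁ - j₁) 1 (j₁ - 1) hvmj hv11 hvj1m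
    rwa [if_pos (by omega)] at h
  have hA0 : (A i₁ : ℂ) ≠ 0 := Nat.cast_ne_zero.2 (by omega)
  have hc₀ne : c₀ ≠ 0 := by
    intro h
    rw [h, mul_zero] at hc₀
    exact inv_ne_zero hA0 hc₀.symm
  -- evaluate the left-hand side of WDVV
  have hLHS : quadTerm A c (.pt i₂ j₂) (.pt i₃ j₃) (.pt i₁ 1) (.pt i₁ (j₁ - 1)) β 0
      = (A i₁ : ℂ) *
        ((dfac β [(i₂, j₂), (i₃, j₃), (i₁, j₁)] : ℂ) * c γ 0) *
        ((dfac 0 [(i₁, A i₁ - j₁), (i₁, 1), (i₁, j₁ - 1)] : ℂ) * c₀) := by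
    rw [quadTerm_pt_zero]
    rw [Finset.sum_eq_single_of_mem (β, (0 : Expv))
      (Finset.HasAntidiagonal.mem_antidiagonal.2 (add_zero β))]
    · rw [Finset.sum_eq_single_of_mem i₁ (Finset.mem_univ _)]
      · rw [Finset.sum_eq_single_of_mem j₁ (Finset.mem_Icc.2 ⟨hj₁1, hj₁2⟩)]
        · have hγeq : β + (e i₂ j₂ + e i₃ j₃ + e i₁ j₁) = γ := by
            rw [← hβT]; abel
          rw [hγeq]
          simp [hc₀def]
        · intro j hj hne
          have hj' := Finset.mem_Icc.1 hj
          have hcz : c (e i₁ (A i₁ - j) + e i₁ 1 + e i₁ (j₁ - 1)) 0 = 0 := by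
            have h := hcub.2 i₁ (A i₁ - j) 1 (j₁ - 1) (validPt_mk (by omega) (by omega)) hv11 hvj1m
            rw [if_neg (by omega)] at h
            exact (mul_eq_zero.1 h).resolve_left (sFactor_ne_zero _ _ _)
          simp [hcz]
      · intro i _ hne
        apply Finset.sum_eq_zero
        intro j hj
        have hj' := Finset.mem_Icc.1 hj
        have hcz : c (e i (A i - j) + e i₁ 1 + e i₁ (j₁ - 1)) 0 = 0 :=
          hcub.1 i i₁ i₁ (A i - j) 1 (j₁ - 1) (validPt_mk (by omega) (by omega)) hv11 hvj1m
            (fun hh => hne hh.1)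
        simp [hcz]
    · intro x hx hne
      obtain ⟨x1, x2⟩ := x
      have hx' : x1 + x2 = β := Finset.HasAntidiagonal.mem_antidiagonal.1 hx
      have hx1 : x1 = 0 := by
        by_contra h1
        have hl := congrArg len hx'
        rw [len_add, hlenβ] at hl
        have h2 : x2 = 0 := by
          apply len_eq_zero
          have : len x1 ≠ 0 := fun h => h1 (len_eq_zero h)
          omega
        exact hne (by rw [h2] at hx' ⊢; rw [add_zero] at hx'; rw [hx'])
      apply Finset.sum_eq_zero
      intro i _
      apply Finset.sum_eq_zero
      intro j hj
      have hj' := Finset.mem_Icc.1 hj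
      have hcz : c (e i₂ j₂ + e i₃ j₃ + e i j) 0 = 0 :=
        hcub.1 i₂ i₃ i j₂ j₃ j hv₂ hv₃ (validPt_mk (by omega) (by omega)) (fun hh => h23 hh.1)
      simp [hx1, hcz]
  -- the right-hand side of WDVV vanishes
  have hRHS : quadTerm A c (.pt i₂ j₂) (.pt i₁ 1) (.pt i₃ j₃) (.pt i₁ (j₁ - 1)) β 0 = 0 := by
    rw [quadTerm_pt_zero]
    apply Finset.sum_eq_zero
    intro x hx
    apply Finset.sum_eq_zero
    intro i _
    apply Finset.sum_eq_zero
    intro j hj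
    have hj' := Finset.mem_Icc.1 hj
    have hx' : x.1 + x.2 = β := Finset.HasAntidiagonal.mem_antidiagonal.1 hx
    have hone : x.1 = 0 ∨ x.2 = 0 := by
      have hl := congrArg len hx'
      rw [len_add, hlenβ] at hl
      rcases Nat.eq_zero_or_pos (len x.1) with h | h
      · exact Or.inl (len_eq_zero h)
      · exact Or.inr (len_eq_zero (by omega))
    rcases hone with h | h
    · have hcz : c (e i₂ j₂ + e i₁ 1 + e i j) 0 = 0 :=
        hcub.1 i₂ i₁ i j₂ 1 j hv₂ hv11 (validPt_mk (by omega) (by omega))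
          (fun hh => h12 hh.1.symm)
      simp [h, hcz]
    · have hcz : c (e i (A i - j) + e i₃ j₃ + e i₁ (j₁ - 1)) 0 = 0 :=
        hcub.1 i i₃ i₁ (A i - j) j₃ (j₁ - 1) (validPt_mk (by omega) (by omega)) hv₃ hvj1m
          (fun hh => h13 hh.2.symm)
      simp [h, hcz]
  rw [hLHS, hRHS] at hW
  have hD : (dfac β [(i₂, j₂), (i₃, j₃), (i₁, j₁)] : ℂ) ≠ 0 :=
    Nat.cast_ne_zero.2 (dfac_ne_zero _ _)
  have hE : (dfac 0 [(i₁, A i₁ - j₁), (i₁, 1), (i₁, j₁ - 1)] : ℂ) ≠ 0 :=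
    Nat.cast_ne_zero.2 (dfac_ne_zero _ _)
  rcases mul_eq_zero.1 hW with h | h
  · rcases mul_eq_zero.1 h with h' | h'
    · exact absurd h' hA0
    · exact (mul_eq_zero.1 h').resolve_left hD
  · exact absurd h (mul_ne_zero hE hc₀ne)


end FrobeniusUniqueness
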